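/- Let f : ℝ^n → ℝ ∪ {+∞} be a lower semicontinuous function and ȳ ∈ J(f). Regarding f as the set-valued mapping x ⇉ {f(x)} for x ∈ dom f (so gph f = {(x, f(x)) : x ∈ dom f}), one has ∂f(∞, ȳ) = D*f(∞, ȳ)(1), where ∂f(∞, ȳ) is the limiting subdifferential of f at (∞, ȳ) and D*f(∞, ȳ) is the coderivative at infinity of this set-valued mapping. -/

import Mathlib

open Filter Topology Set Metric Pointwise
open scoped RealInnerProductSpace ENNReal

noncomputable section

variable {E F G : Type*}
  [NormedAddCommGroup E] [InnerProductSpace ℝ E]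
  [NormedAddCommGroup F] [InnerProductSpace ℝ F]
  [NormedAddCommGroup G] [InnerProductSpace ℝ G]

/-- The regular (Fréchet) normal cone to a subset of a product of inner product
spaces, at a point `p` (empty if `p ∉ Ω`). -/
def frechetNormalCone2 (Ω : Set (E × F)) (p : E × F) : Set (E × F) :=
  {ξ | p ∈ Ω ∧ ∀ ε > (0:ℝ), ∀ᶠ q in nhdsWithin p Ω,
      ⟪ξ.1, q.1 - p.1⟫ + ⟪ξ.2, q.2 - p.2⟫ ≤ ε * ‖q - p‖}

/-- The limiting (Mordukhovich) normal cone. -/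
def limitingNormalCone2 (Ω : Set (E × F)) (p : E × F) : Set (E × F) :=
  {ξ | ∃ pk : ℕ → E × F, ∃ ξk : ℕ → E × F,
    (∀ k, pk k ∈ Ω) ∧ Tendsto pk atTop (𝓝 p) ∧
    (∀ k, ξk k ∈ frechetNormalCone2 Ω (pk k)) ∧ Tendsto ξk atTop (𝓝 ξ)}

/-- The normal cone to `Ω ⊆ E × F` at `(∞, ȳ)`. -/
def normalConeAtInfty (Ω : Set (E × F)) (ybar : F) : Set (E × F) :=
  {ξ | ∃ pk : ℕ → E × F, ∃ ξk : ℕ → E × F,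
    (∀ k, pk k ∈ Ω) ∧ Tendsto (fun k => ‖(pk k).1‖) atTop atTop ∧
    Tendsto (fun k => (pk k).2) atTop (𝓝 ybar) ∧
    (∀ k, ξk k ∈ frechetNormalCone2 Ω (pk k)) ∧ Tendsto ξk atTop (𝓝 ξ)}

/-- `Ω ⊆ E × F` is locally closed at `(∞, ȳ)`. -/
def LocallyClosedAtInfty (Ω : Set (E × F)) (ybar : F) : Prop :=
  ∃ R > (0:ℝ), ∃ V ∈ 𝓝 ybar, IsClosed V ∧
    IsClosed (Ω ∩ {p : E × F | R ≤ ‖p.1‖ ∧ p.2 ∈ V})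

/-- Graph of a set-valued mapping. -/
def svGraph (S : E → Set F) : Set (E × F) := {p | p.2 ∈ S p.1}

/-- Jelonek set of a set-valued mapping. -/
def jelonek (S : E → Set F) : Set F :=
  {y | ∃ xk : ℕ → E, ∃ yk : ℕ → F,
    Tendsto (fun k => ‖xk k‖) atTop atTop ∧ (∀ k, yk k ∈ S (xk k)) ∧
    Tendsto yk atTop (𝓝 y)}

/-- Coderivative of a set-valued mapping at a point of its graph. -/
def coderiv (S : E → Set F) (x : E) (y : F) (v : F) : Set E :=
  {u | (u, -v) ∈ limitingNormalCone2 (svGraph S) (x, y)}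

/-- Coderivative of a set-valued mapping at `(∞, ȳ)`. -/
def coderivAtInfty (S : E → Set F) (ybar : F) (v : F) : Set E :=
  {u | (u, -v) ∈ normalConeAtInfty (svGraph S) ybar}

/-- Regular normal cone, one-space version. -/
def frechetNormalCone1 (Ω : Set E) (x : E) : Set E :=
  {ξ | x ∈ Ω ∧ ∀ ε > (0:ℝ), ∀ᶠ x' in nhdsWithin x Ω, ⟪ξ, x' - x⟫ ≤ ε * ‖x' - x‖}

/-- Normal cone at infinity to an unbounded subset of `E`. -/
def normalConeAtInfty1 (Ω : Set E) : Set E :=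
  {ξ | ∃ xk : ℕ → E, ∃ ξk : ℕ → E, (∀ k, xk k ∈ Ω) ∧
    Tendsto (fun k => ‖xk k‖) atTop atTop ∧
    (∀ k, ξk k ∈ frechetNormalCone1 Ω (xk k)) ∧ Tendsto ξk atTop (𝓝 ξ)}

/-- Epigraph of an extended-real-valued function. -/
def epiSet (f : E → EReal) : Set (E × ℝ) := {p | f p.1 ≤ (p.2 : EReal)}

/-- Graph of an extended-real-valued function, as a subset of `E × ℝ`. -/
def gphFun (f : E → EReal) : Set (E × ℝ) := {p | f p.1 = (p.2 : EReal)}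

/-- Jelonek set of a function. -/
def jelonekFun (f : E → EReal) : Set ℝ :=
  {y | ∃ xk : ℕ → E, Tendsto (fun k => ‖xk k‖) atTop atTop ∧
    Tendsto (fun k => f (xk k)) atTop (𝓝 (y : EReal))}

/-- Limiting subdifferential of `f` at `x` (empty outside `dom f`). -/
def limSubdiff (f : E → EReal) (x : E) : Set E :=
  {u | ∃ r : ℝ, f x = (r : EReal) ∧
    (u, (-1 : ℝ)) ∈ limitingNormalCone2 (epiSet f) (x, r)}

/-- Limiting subdifferential of `f` at `(∞, ȳ)`. -/
def limSubdiffAtInfty (f : E → EReal) (ybar : ℝ) : Set E :=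
  {u | (u, (-1 : ℝ)) ∈ normalConeAtInfty (epiSet f) ybar}

/-- Singular subdifferential of `f` at `(∞, ȳ)`. -/
def singSubdiffAtInfty (f : E → EReal) (ybar : ℝ) : Set E :=
  {u | (u, (0 : ℝ)) ∈ normalConeAtInfty (epiSet f) ybar}

/-- Inverse of a set-valued mapping. -/
def svInv (S : E → Set F) (y : F) : Set E := {x | y ∈ S x}

/-- Preimage `F⁻¹(V) = {x : F(x) ∩ V ≠ ∅}`. -/
def svPreimage (S : E → Set F) (V : Set F) : Set E := {x | (S x ∩ V).Nonempty}

/-- Distance function of a set-valued mapping, with value `+∞` on empty values. -/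
def dSV (S : E → Set F) (p : E × F) : EReal :=
  ((EMetric.infEdist p.2 (S p.1) : ℝ≥0∞) : EReal)

/-- Regular normal cone on `(E × F) × ℝ`. -/
def frechetNormalCone3 (Ω : Set ((E × F) × ℝ)) (p : (E × F) × ℝ) : Set ((E × F) × ℝ) :=
  {ξ | p ∈ Ω ∧ ∀ ε > (0:ℝ), ∀ᶠ q in nhdsWithin p Ω,
      ⟪ξ.1.1, q.1.1 - p.1.1⟫ + ⟪ξ.1.2, q.1.2 - p.1.2⟫ + ξ.2 * (q.2 - p.2)
        ≤ ε * ‖q - p‖}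

/-- Limiting normal cone on `(E × F) × ℝ`. -/
def limitingNormalCone3 (Ω : Set ((E × F) × ℝ)) (p : (E × F) × ℝ) : Set ((E × F) × ℝ) :=
  {ξ | ∃ pk ξk : ℕ → (E × F) × ℝ, (∀ k, pk k ∈ Ω) ∧ Tendsto pk atTop (𝓝 p) ∧
    (∀ k, ξk k ∈ frechetNormalCone3 Ω (pk k)) ∧ Tendsto ξk atTop (𝓝 ξ)}

/-- Limiting subdifferential of the distance function `d_F`. -/
def limSubdiffD (S : E → Set F) (p : E × F) : Set (E × F) :=
  {w | ∃ r : ℝ, dSV S p = (r : EReal) ∧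
    (w, (-1 : ℝ)) ∈ limitingNormalCone3 {q : (E × F) × ℝ | dSV S q.1 ≤ (q.2 : EReal)} (p, r)}

/-- The set `J⁺(F₁ + F₂, y)`. -/
def jplus (S₁ S₂ : E → Set F) (y : F) : Set (F × F) :=
  {q | ∃ xk : ℕ → E, ∃ y1k y2k : ℕ → F,
    Tendsto (fun k => ‖xk k‖) atTop atTop ∧
    (∀ k, y1k k ∈ S₁ (xk k)) ∧ (∀ k, y2k k ∈ S₂ (xk k)) ∧
    Tendsto y1k atTop (𝓝 q.1) ∧ Tendsto y2k atTop (𝓝 q.2) ∧ q.1 + q.2 = y}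

/-- The set `J°(F₂ ∘ F₁, y)`. -/
def jcirc (S₁ : E → Set G) (S₂ : G → Set F) (y : F) : Set G :=
  {z | ∃ xk : ℕ → E, ∃ zk : ℕ → G, ∃ yk : ℕ → F,
    Tendsto (fun k => ‖xk k‖) atTop atTop ∧ (∀ k, zk k ∈ S₁ (xk k)) ∧
    (∀ k, yk k ∈ S₂ (zk k)) ∧ Tendsto zk atTop (𝓝 z) ∧ Tendsto yk atTop (𝓝 y)}

/-- Composition `F₂ ∘ F₁` of set-valued mappings. -/
def svComp (S₂ : G → Set F) (S₁ : E → Set G) (x : E) : Set F :=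
  {y | ∃ z ∈ S₁ x, y ∈ S₂ z}

abbrev Eucl (n : ℕ) := EuclideanSpace ℝ (Fin n)


set_option linter.unusedVariables false
set_option linter.unusedSectionVars false

section RealLemmas
variable {E : Type*} [NormedAddCommGroup E] [InnerProductSpace ℝ E]

lemma inner_real' (a b : ℝ) : ⟪a, b⟫ = a * b := by simp [RCLike.inner_apply, mul_comm]

lemma ev_nw_iff {p : E × ℝ} {Ω : Set (E × ℝ)} {P : E × ℝ → Prop} :
    (∀ᶠ q in nhdsWithin p Ω, P q) ↔ ∃ δ > (0:ℝ), ∀ q ∈ Ω, dist q p < δ → P q := by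
  rw [eventually_nhdsWithin_iff, Metric.eventually_nhds_iff]
  constructor
  · rintro ⟨ε, hε, h⟩; exact ⟨ε, hε, fun x hx hd => h hd hx⟩
  · rintro ⟨ε, hε, h⟩; exact ⟨ε, hε, fun x hd hx => h x hx hd⟩

lemma fnc2_mono {Ω₁ Ω₂ : Set (E × ℝ)} (h : Ω₁ ⊆ Ω₂) {p : E × ℝ} (hp : p ∈ Ω₁) :
    frechetNormalCone2 Ω₂ p ⊆ frechetNormalCone2 Ω₁ p := fun ξ hξ =>
  ⟨hp, fun ε hε => Filter.Eventually.filter_mono (nhdsWithin_mono p h) (hξ.2 ε hε)⟩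

lemma gph_subset_epi (f : E → EReal) : gphFun f ⊆ epiSet f := fun _ hp => le_of_eq hp

lemma epi_fnc_neg {f : E → EReal} (hbot : ∀ x, f x ≠ ⊥) {x : E} {r : ℝ} {ξ : E × ℝ}
    (hξ : ξ ∈ frechetNormalCone2 (epiSet f) (x, r)) (hneg : ξ.2 < 0) : f x = (r : EReal) := by
  have hle : f x ≤ (r : EReal) := hξ.1
  by_contra h
  have hlt : f x < (r : EReal) := lt_of_le_of_ne hle h
  have hnt : f x ≠ ⊤ := ne_top_of_le_ne_top (EReal.coe_ne_top r) hle
  set t' := (f x).toReal with ht'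
  have hfx : f x = (t' : EReal) := (EReal.coe_toReal hnt (hbot x)).symm
  have ht'r : t' < r := by rw [hfx, EReal.coe_lt_coe_iff] at hlt; exact hlt
  have hε : (0:ℝ) < -ξ.2 / 2 := by linarith
  obtain ⟨δ, hδ, hev⟩ := ev_nw_iff.mp (hξ.2 (-ξ.2 / 2) hε)
  set t := min (δ/2) (r - t') with htdef
  have ht : 0 < t := lt_min (by linarith) (by linarith)
  have hq : ((x, r - t) : E × ℝ) ∈ epiSet f := by
    show f x ≤ ((r - t : ℝ) : EReal)
    rw [hfx, EReal.coe_le_coe_iff]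
    have : t ≤ r - t' := min_le_right _ _
    linarith
  have hd : dist ((x, r - t) : E × ℝ) (x, r) < δ := by
    rw [Prod.dist_eq]
    simp only [dist_self, Real.dist_eq]
    have : |r - t - r| = t := by rw [abs_of_nonpos (by linarith)]; ring
    rw [this]
    have h1 : t ≤ δ/2 := min_le_left _ _
    simp only [max_lt_iff]
    exact ⟨hδ, by linarith⟩
  have := hev _ hq hd
  simp only [inner_real', sub_self, inner_zero_right] at this
  have hnorm : ‖((x, r - t) : E × ℝ) - (x, r)‖ = t := by
    have heq : ((x, r - t) : E × ℝ) - (x, r) = (0, -t) := by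
      ext <;> simp
    rw [heq, Prod.norm_def]
    simp [Real.norm_eq_abs, abs_of_pos ht, ht.le]
  rw [hnorm] at this
  nlinarith

lemma gph_fnc_to_epi {f : E → EReal} (hlsc : LowerSemicontinuous f) (hbot : ∀ x, f x ≠ ⊥)
    {x : E} {y : ℝ} (hxy : f x = (y : EReal)) {ξ : E × ℝ}
    (hξ : ξ ∈ frechetNormalCone2 (gphFun f) (x, y)) (hneg : ξ.2 < 0) :
    ξ ∈ frechetNormalCone2 (epiSet f) (x, y) := by
  refine ⟨le_of_eq hxy, fun ε hε => ?_⟩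
  set ε' := min ε (-ξ.2) with hε'def
  have hε' : 0 < ε' := lt_min hε (by linarith)
  obtain ⟨δ, hδ, hev⟩ := ev_nw_iff.mp (hξ.2 ε' hε')
  have hc : (((y - δ/2 : ℝ)) : EReal) < f x := by
    rw [hxy, EReal.coe_lt_coe_iff]; linarith
  obtain ⟨η, hη, hlscball⟩ := Metric.eventually_nhds_iff.mp (hlsc x _ hc)
  rw [ev_nw_iff]
  refine ⟨min η (δ/2), lt_min hη (by linarith), fun q hq hd => ?_⟩
  rw [Prod.dist_eq, max_lt_iff] at hd
  obtain ⟨hd1, hd2⟩ := hd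
  have hd1η : dist q.1 x < η := hd1.trans_le (min_le_left _ _)
  have hd2δ : dist q.2 y < δ/2 := hd2.trans_le (min_le_right _ _)
  have hflow : (((y - δ/2 : ℝ)) : EReal) < f q.1 := hlscball hd1η
  have hfup : f q.1 ≤ (q.2 : EReal) := hq
  have hnt : f q.1 ≠ ⊤ := ne_top_of_le_ne_top (EReal.coe_ne_top q.2) hfup
  set t := (f q.1).toReal with htdef
  have hft : f q.1 = (t : EReal) := (EReal.coe_toReal hnt (hbot q.1)).symm
  have htq : t ≤ q.2 := by rw [hft, EReal.coe_le_coe_iff] at hfup; exact hfup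
  have htlow : y - δ/2 < t := by rw [hft, EReal.coe_lt_coe_iff] at hflow; exact hflow
  have hq2 : |q.2 - y| < δ/2 := by rwa [Real.dist_eq] at hd2δ
  have hty : |t - y| < δ := by
    rw [abs_lt] at hq2 ⊢
    constructor
    · linarith
    · linarith
  have hgmem : ((q.1, t) : E × ℝ) ∈ gphFun f := hft
  have hgd : dist ((q.1, t) : E × ℝ) (x, y) < δ := by
    rw [Prod.dist_eq, max_lt_iff]
    exact ⟨hd1.trans_le ((min_le_right _ _).trans (by linarith)), by rwa [Real.dist_eq]⟩
  have hkey := hev _ hgmem hgd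
  simp only [inner_real'] at hkey ⊢
  -- norms
  have hN1 : ‖((q.1, t) : E × ℝ) - (x, y)‖ = max ‖q.1 - x‖ |t - y| := by
    rw [Prod.norm_def]; simp [Real.norm_eq_abs]
  have hN : ‖q - ((x, y) : E × ℝ)‖ = max ‖q.1 - x‖ |q.2 - y| := by
    rw [Prod.norm_def]; simp [Real.norm_eq_abs]
  set s := q.2 - t with hsdef
  have hs : 0 ≤ s := by linarith
  have hN1le : ‖((q.1, t) : E × ℝ) - (x, y)‖ ≤ ‖q - ((x, y) : E × ℝ)‖ + s := by
    rw [hN1, hN]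
    apply max_le
    · exact le_add_of_le_of_nonneg (le_max_left _ _) hs
    · have : |t - y| ≤ |q.2 - y| + s := by
        calc |t - y| ≤ |t - q.2| + |q.2 - y| := abs_sub_le _ _ _
        _ = |q.2 - y| + s := by rw [abs_of_nonpos (by linarith : t - q.2 ≤ 0)]; ring
      exact this.trans (by simp [le_max_right, add_le_add_right, le_max_right _ _])
  have hNnn : 0 ≤ ‖q - ((x, y) : E × ℝ)‖ := norm_nonneg _
  have hεε : ε' ≤ ε := min_le_left _ _
  have hel : ε' ≤ -ξ.2 := min_le_right _ _
  have h1 : ε' * ‖((q.1, t) : E × ℝ) - (x, y)‖ ≤ ε' * (‖q - ((x, y) : E × ℝ)‖ + s) :=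
    mul_le_mul_of_nonneg_left hN1le hε'.le
  have h2 : (ε' + ξ.2) * s ≤ 0 := mul_nonpos_of_nonpos_of_nonneg (by linarith) hs
  have h3 : ε' * ‖q - ((x, y) : E × ℝ)‖ ≤ ε * ‖q - ((x, y) : E × ℝ)‖ :=
    mul_le_mul_of_nonneg_right hεε hNnn
  nlinarith [hkey, h1, h2, h3]

theorem epi_fnc_neg' {f : E → EReal} (hbot : ∀ x, f x ≠ ⊥) {p ξ : E × ℝ}
    (hξ : ξ ∈ frechetNormalCone2 (epiSet f) p) (hneg : ξ.2 < 0) : p ∈ gphFun f :=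
  epi_fnc_neg hbot (show ξ ∈ frechetNormalCone2 (epiSet f) (p.1, p.2) from hξ) hneg

theorem gph_fnc_to_epi' {f : E → EReal} (hlsc : LowerSemicontinuous f) (hbot : ∀ x, f x ≠ ⊥)
    {p ξ : E × ℝ} (hp : p ∈ gphFun f)
    (hξ : ξ ∈ frechetNormalCone2 (gphFun f) p) (hneg : ξ.2 < 0) :
    ξ ∈ frechetNormalCone2 (epiSet f) p :=
  gph_fnc_to_epi hlsc hbot (x := p.1) (y := p.2) hp (show ξ ∈ frechetNormalCone2 (gphFun f) (p.1, p.2) from hξ) hneg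

end RealLemmas

/-- `∂f(∞, ȳ) = D*f(∞, ȳ)(1)`. -/
theorem stmt8 {n : ℕ} (f : Eucl n → EReal)
    (hlsc : LowerSemicontinuous f) (hbot : ∀ x, f x ≠ ⊥)
    (ybar : ℝ) (hJ : ybar ∈ jelonekFun f) :
    limSubdiffAtInfty f ybar =
      {u : Eucl n | (u, -(1 : ℝ)) ∈ normalConeAtInfty (gphFun f) ybar} := by
  ext u
  simp only [limSubdiffAtInfty, normalConeAtInfty, Set.mem_setOf_eq]
  constructor
  · rintro ⟨pk, ξk, hmem, hnorm, ht2, hfnc, hξ⟩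
    have h2 : Tendsto (fun k => (ξk k).2) atTop (𝓝 (-1 : ℝ)) :=
      (continuous_snd.tendsto _).comp hξ
    obtain ⟨N, hN⟩ := eventually_atTop.mp
      (h2.eventually (eventually_lt_nhds (show (-1 : ℝ) < 0 by norm_num)))
    have hgph : ∀ k, pk (k + N) ∈ gphFun f := fun k =>
      epi_fnc_neg' hbot (hfnc (k + N)) (hN _ (Nat.le_add_left N k))
    exact ⟨fun k => pk (k + N), fun k => ξk (k + N), hgph,
      hnorm.comp (tendsto_add_atTop_nat N), ht2.comp (tendsto_add_atTop_nat N),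
      fun k => fnc2_mono (gph_subset_epi f) (hgph k) (hfnc (k + N)),
      hξ.comp (tendsto_add_atTop_nat N)⟩
  · rintro ⟨pk, ξk, hmem, hnorm, ht2, hfnc, hξ⟩
    have h2 : Tendsto (fun k => (ξk k).2) atTop (𝓝 (-1 : ℝ)) :=
      (continuous_snd.tendsto _).comp hξ
    obtain ⟨N, hN⟩ := eventually_atTop.mp
      (h2.eventually (eventually_lt_nhds (show (-1 : ℝ) < 0 by norm_num)))
    exact ⟨fun k => pk (k + N), fun k => ξk (k + N),
      fun k => gph_subset_epi f (hmem (k + N)),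
      hnorm.comp (tendsto_add_atTop_nat N), ht2.comp (tendsto_add_atTop_nat N),
      fun k => gph_fnc_to_epi' hlsc hbot (hmem (k + N)) (hfnc (k + N))
        (hN _ (Nat.le_add_left N k)),
      hξ.comp (tendsto_add_atTop_nat N)⟩
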